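/- Let (φ_j)_{j∈ℕ} be a family of functions φ_j : Ω → [0,1] on a metric measure space Ω such that ∑_j φ_j = 1 pointwise and every point of Ω lies in the support of at most N of the φ_j. Let (A_j) be uniformly bounded operators on L^p and (a_j), (b_j) functions Ω → [0,1] whose supports have covering multiplicity at most N. Then the series ∑_j M_{a_j} A_j M_{b_j} converges strongly, ‖∑_j M_{a_j} A_j M_{b_j}‖ ≤ N² sup_j ‖A_j‖, and ∑_j ‖M_{a_j} A_j M_{b_j} f‖^p ≤ N (sup_j ‖A_j‖)^p ‖f‖^p for all f ∈ L^p. -/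

import Mathlib

open MeasureTheory
open scoped NNReal ENNReal

lemma stmt10_tsum_le_of_encard_le {S : Set ℕ} {N : ℕ} (hS : S.encard ≤ N) (c : ℕ → ℝ≥0∞)
    (hc1 : ∀ j, c j ≤ 1) (hc0 : ∀ j, j ∉ S → c j = 0) : ∑' j, c j ≤ N := by
  have hfin : S.Finite := by
    rw [← Set.encard_lt_top_iff]
    exact lt_of_le_of_lt hS (by simp)
  have h1 : ∑' j, c j = ∑ j ∈ hfin.toFinset, c j :=
    tsum_eq_sum (fun j hj => hc0 j (by simpa using hj))
  have h2 : ∑ j ∈ hfin.toFinset, c j ≤ hfin.toFinset.card • (1 : ℝ≥0∞) :=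
    Finset.sum_le_card_nsmul _ _ _ (fun j _ => hc1 j)
  have h3 : (hfin.toFinset.card : ℕ∞) ≤ N := by
    rwa [← Set.encard_coe_eq_coe_finsetCard, hfin.coe_toFinset]
  have h4 : (hfin.toFinset.card : ℝ≥0∞) ≤ N := by exact_mod_cast h3
  calc ∑' j, c j = ∑ j ∈ hfin.toFinset, c j := h1
    _ ≤ hfin.toFinset.card • (1 : ℝ≥0∞) := h2
    _ = (hfin.toFinset.card : ℝ≥0∞) := by simp
    _ ≤ N := h4

lemma stmt10_coeFn_sum {Ω : Type*} [MeasurableSpace Ω] {μ : Measure Ω} {q : ℝ≥0∞}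
    (F : Finset ℕ) (g : ℕ → Lp ℝ q μ) :
    ((∑ j ∈ F, g j : Lp ℝ q μ) : Ω → ℝ) =ᵐ[μ] fun x => ∑ j ∈ F, (g j : Ω → ℝ) x := by
  classical
  induction F using Finset.induction with
  | empty => simp; exact Lp.coeFn_zero ℝ q μ
  | @insert j F hj ih =>
    rw [Finset.sum_insert hj]
    filter_upwards [Lp.coeFn_add (g j) (∑ i ∈ F, g i), ih] with x hx hx2
    rw [hx]
    simp only [Pi.add_apply, Finset.sum_insert hj, hx2]

set_option maxHeartbeats 1000000 in
theorem stmt10 {Ω : Type*} [MeasurableSpace Ω] (μ : Measure Ω)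
    (p : ℝ≥0) (hp : 1 ≤ p) [Fact (1 ≤ (p : ℝ≥0∞))] (N : ℕ)
    (a b : ℕ → Ω → ℝ)
    (ha01 : ∀ j x, a j x ∈ Set.Icc (0 : ℝ) 1) (hb01 : ∀ j x, b j x ∈ Set.Icc (0 : ℝ) 1)
    (haN : ∀ x, Set.encard {j | a j x ≠ 0} ≤ N)
    (hbN : ∀ x, Set.encard {j | b j x ≠ 0} ≤ N)
    (A : ℕ → Lp ℝ (p : ℝ≥0∞) μ →L[ℝ] Lp ℝ (p : ℝ≥0∞) μ)
    (hbd : BddAbove (Set.range fun j => ‖A j‖))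
    (Ma Mb : ℕ → Lp ℝ (p : ℝ≥0∞) μ →L[ℝ] Lp ℝ (p : ℝ≥0∞) μ)
    (hMa : ∀ j (f : Lp ℝ (p : ℝ≥0∞) μ), (Ma j f : Ω → ℝ) =ᵐ[μ] fun x => a j x * f x)
    (hMb : ∀ j (f : Lp ℝ (p : ℝ≥0∞) μ), (Mb j f : Ω → ℝ) =ᵐ[μ] fun x => b j x * f x) :
    ∃ T : Lp ℝ (p : ℝ≥0∞) μ →L[ℝ] Lp ℝ (p : ℝ≥0∞) μ,
      (∀ f, HasSum (fun j => Ma j (A j (Mb j f))) (T f)) ∧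
      ‖T‖ ≤ (N : ℝ) ^ 2 * ⨆ j, ‖A j‖ ∧
      ∀ f, ∑' j, ‖Ma j (A j (Mb j f))‖ ^ (p : ℝ)
        ≤ N * (⨆ j, ‖A j‖) ^ (p : ℝ) * ‖f‖ ^ (p : ℝ) := by
  classical
  set pr : ℝ := (p : ℝ) with hprdef
  have hpr1 : 1 ≤ pr := by exact_mod_cast hp
  have hpr0 : 0 < pr := lt_of_lt_of_le one_pos hpr1
  have hpne : (p : ℝ≥0∞) ≠ 0 := by
    simp only [ne_eq, ENNReal.coe_eq_zero]
    intro h; rw [h] at hp; simp at hp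
  have hptop : (p : ℝ≥0∞) ≠ ∞ := ENNReal.coe_ne_top
  have hptoReal : ((p : ℝ≥0∞)).toReal = pr := by simp [hprdef]
  set E := Lp ℝ (p : ℝ≥0∞) μ
  set C : ℝ := ⨆ j, ‖A j‖ with hCdef
  have hCj : ∀ j, ‖A j‖ ≤ C := fun j => le_ciSup hbd j
  have hC0 : 0 ≤ C := le_trans (norm_nonneg (A 0)) (hCj 0)
  -- the `p`-th power integral
  set I : E → ℝ≥0∞ := fun f => ∫⁻ x, (‖(f : Ω → ℝ) x‖₊ : ℝ≥0∞) ^ pr ∂μ with hIdef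
  have hIeq : ∀ f : E, eLpNorm (f : Ω → ℝ) (p : ℝ≥0∞) μ = I f ^ (1 / pr) := by
    intro f
    rw [eLpNorm_eq_lintegral_rpow_enorm_toReal hpne hptop, hptoReal]; rfl
  have hIfin : ∀ f : E, I f ≠ ∞ := by
    intro f
    intro h
    have := Lp.eLpNorm_ne_top f
    rw [hIeq f, h, ENNReal.top_rpow_of_pos (by positivity)] at this
    exact this rfl
  have hInorm : ∀ f : E, ‖f‖ ^ pr = (I f).toReal := by
    intro f
    rw [Lp.norm_def, hIeq f, ← ENNReal.toReal_rpow,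
      ← Real.rpow_mul ENNReal.toReal_nonneg, one_div_mul_cancel hpr0.ne', Real.rpow_one]
  -- multiplication by `a j` is a contraction
  have hMaNorm : ∀ j (g : E), ‖Ma j g‖ ≤ ‖g‖ := by
    intro j g
    rw [Lp.norm_def, Lp.norm_def]
    refine ENNReal.toReal_mono (Lp.eLpNorm_ne_top g) (eLpNorm_mono_ae ?_)
    filter_upwards [hMa j g] with x hx
    rw [hx, norm_mul]
    have h1 : ‖a j x‖ ≤ 1 := by
      rw [Real.norm_eq_abs]
      exact abs_le.2 ⟨by linarith [(ha01 j x).1], (ha01 j x).2⟩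
    calc ‖a j x‖ * ‖(g : Ω → ℝ) x‖ ≤ 1 * ‖(g : Ω → ℝ) x‖ :=
          mul_le_mul_of_nonneg_right h1 (norm_nonneg _)
      _ = ‖(g : Ω → ℝ) x‖ := one_mul _
  -- Lemma C : the `ℓ^p` bound for the multiplications by `b j`
  have hIb : ∀ f : E, ∑' j, I (Mb j f) ≤ N * I f := by
    intro f
    have hae : ∀ j, I (Mb j f) = ∫⁻ x, (‖b j x * (f : Ω → ℝ) x‖₊ : ℝ≥0∞) ^ pr ∂μ := by
      intro j
      refine lintegral_congr_ae ?_
      filter_upwards [hMb j f] with x hx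
      rw [hx]
    have hmeas : ∀ j, AEMeasurable (fun x => (‖b j x * (f : Ω → ℝ) x‖₊ : ℝ≥0∞) ^ pr) μ := by
      intro j
      refine AEMeasurable.congr ((Lp.aestronglyMeasurable (Mb j f)).enorm.pow_const pr) ?_
      filter_upwards [hMb j f] with x hx
      simp only [hx, enorm_eq_nnnorm]
    have hpt : ∀ x, ∑' j, (‖b j x * (f : Ω → ℝ) x‖₊ : ℝ≥0∞) ^ pr
        ≤ (N : ℝ≥0∞) * (‖(f : Ω → ℝ) x‖₊ : ℝ≥0∞) ^ pr := by
      intro x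
      have hsplit : ∀ j, (‖b j x * (f : Ω → ℝ) x‖₊ : ℝ≥0∞) ^ pr
          = (‖b j x‖₊ : ℝ≥0∞) ^ pr * (‖(f : Ω → ℝ) x‖₊ : ℝ≥0∞) ^ pr := by
        intro j
        rw [nnnorm_mul, ENNReal.coe_mul, ENNReal.mul_rpow_of_nonneg _ _ hpr0.le]
      simp_rw [hsplit]
      rw [ENNReal.tsum_mul_right]
      refine mul_le_mul_left ?_ _
      refine stmt10_tsum_le_of_encard_le (hbN x) _ (fun j => ?_) (fun j hj => ?_)
      · have hb1 : ‖b j x‖ ≤ 1 := by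
          rw [Real.norm_eq_abs]
          exact abs_le.2 ⟨by linarith [(hb01 j x).1], (hb01 j x).2⟩
        have h1 : (‖b j x‖₊ : ℝ≥0∞) ≤ 1 := by exact_mod_cast hb1
        calc (‖b j x‖₊ : ℝ≥0∞) ^ pr ≤ (1 : ℝ≥0∞) ^ pr := ENNReal.rpow_le_rpow h1 hpr0.le
          _ = 1 := ENNReal.one_rpow _
      · have : b j x = 0 := by simpa using hj
        simp [this, ENNReal.zero_rpow_of_pos hpr0]
    calc ∑' j, I (Mb j f)
        = ∫⁻ x, ∑' j, (‖b j x * (f : Ω → ℝ) x‖₊ : ℝ≥0∞) ^ pr ∂μ := by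
          rw [lintegral_tsum hmeas]; exact tsum_congr hae
      _ ≤ ∫⁻ x, (N : ℝ≥0∞) * (‖(f : Ω → ℝ) x‖₊ : ℝ≥0∞) ^ pr ∂μ := lintegral_mono hpt
      _ = N * I f := lintegral_const_mul' _ _ (by simp)
  -- partial sums of `‖A j (Mb j f)‖ ^ pr` are bounded
  have hs_bound : ∀ (f : E) (F : Finset ℕ),
      ∑ j ∈ F, ‖A j (Mb j f)‖ ^ pr ≤ C ^ pr * (N * ‖f‖ ^ pr) := by
    intro f F
    have h1 : ∀ j, ‖A j (Mb j f)‖ ^ pr ≤ C ^ pr * ‖Mb j f‖ ^ pr := by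
      intro j
      have h2 : ‖A j (Mb j f)‖ ≤ C * ‖Mb j f‖ :=
        le_trans ((A j).le_opNorm _) (mul_le_mul_of_nonneg_right (hCj j) (norm_nonneg _))
      calc ‖A j (Mb j f)‖ ^ pr ≤ (C * ‖Mb j f‖) ^ pr :=
            Real.rpow_le_rpow (norm_nonneg _) h2 hpr0.le
        _ = C ^ pr * ‖Mb j f‖ ^ pr := Real.mul_rpow hC0 (norm_nonneg _)
    have h3 : ∑ j ∈ F, ‖Mb j f‖ ^ pr ≤ N * ‖f‖ ^ pr := by
      have h4 : ∑ j ∈ F, ‖Mb j f‖ ^ pr = (∑ j ∈ F, I (Mb j f)).toReal := by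
        rw [ENNReal.toReal_sum (fun j _ => hIfin _)]
        exact Finset.sum_congr rfl fun j _ => hInorm _
      rw [h4, hInorm]
      have h5 : ∑ j ∈ F, I (Mb j f) ≤ N * I f :=
        le_trans (ENNReal.sum_le_tsum F) (hIb f)
      have h6 := ENNReal.toReal_mono
        (ENNReal.mul_ne_top (by simp) (hIfin f)) h5
      rwa [ENNReal.toReal_mul, ENNReal.toReal_natCast] at h6
    calc ∑ j ∈ F, ‖A j (Mb j f)‖ ^ pr ≤ ∑ j ∈ F, C ^ pr * ‖Mb j f‖ ^ pr :=
        Finset.sum_le_sum (fun j _ => h1 j)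
      _ = C ^ pr * ∑ j ∈ F, ‖Mb j f‖ ^ pr := by rw [Finset.mul_sum]
      _ ≤ C ^ pr * (N * ‖f‖ ^ pr) :=
        mul_le_mul_of_nonneg_left h3 (Real.rpow_nonneg hC0 _)
  have hs_summable : ∀ f : E, Summable (fun j => ‖A j (Mb j f)‖ ^ pr) := by
    intro f
    exact summable_of_sum_range_le (fun n => Real.rpow_nonneg (norm_nonneg _) _)
      (fun n => hs_bound f (Finset.range n))
  set Npr1 : ℝ := (N : ℝ) ^ (pr - 1) with hNpr1def
  have hNpr1nonneg : 0 ≤ Npr1 := Real.rpow_nonneg (Nat.cast_nonneg N) _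
  have hprm1 : (0 : ℝ) ≤ pr - 1 := by linarith
  -- the key finite-sum estimate
  have hkey : ∀ (g : ℕ → E) (t : Finset ℕ),
      ‖∑ j ∈ t, Ma j (g j)‖ ^ pr ≤ Npr1 * ∑ j ∈ t, ‖g j‖ ^ pr := by
    intro g t
    have hpt : ∀ x, (‖∑ j ∈ t, a j x * ((g j : Ω → ℝ) x)‖₊ : ℝ≥0∞) ^ pr
        ≤ ((N : ℝ≥0∞) ^ (pr - 1)) * ∑ j ∈ t, (‖a j x * ((g j : Ω → ℝ) x)‖₊ : ℝ≥0∞) ^ pr := by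
      intro x
      set z : ℕ → ℝ≥0 := fun j => ‖a j x * ((g j : Ω → ℝ) x)‖₊ with hz
      set t' := t.filter (fun j => a j x ≠ 0) with ht'
      have hsum_eq : ∑ j ∈ t', a j x * ((g j : Ω → ℝ) x) = ∑ j ∈ t, a j x * ((g j : Ω → ℝ) x) :=
        Finset.sum_filter_of_ne (fun j _ hne h0 => hne (by rw [h0, zero_mul]))
      have h0 : ‖∑ j ∈ t, a j x * ((g j : Ω → ℝ) x)‖₊ ≤ ∑ j ∈ t', z j := by
        rw [← hsum_eq]
        exact nnnorm_sum_le _ _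
      have h1 : (∑ j ∈ t', z j) ^ pr ≤ (t'.card : ℝ≥0) ^ (pr - 1) * ∑ j ∈ t', z j ^ pr :=
        NNReal.rpow_sum_le_const_mul_sum_rpow t' z hpr1
      have hcard : ((t'.card : ℝ≥0)) ≤ (N : ℝ≥0) := by
        have h2 : ((t'.card : ℕ∞)) ≤ (N : ℕ∞) := by
          rw [← Set.encard_coe_eq_coe_finsetCard]
          refine le_trans (Set.encard_mono ?_) (haN x)
          intro j hj
          simp only [ht', Finset.coe_filter, Set.mem_setOf_eq] at hj
          exact hj.2
        exact_mod_cast h2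
      have hfinal : (‖∑ j ∈ t, a j x * ((g j : Ω → ℝ) x)‖₊) ^ pr
          ≤ (N : ℝ≥0) ^ (pr - 1) * ∑ j ∈ t, z j ^ pr := by
        calc (‖∑ j ∈ t, a j x * ((g j : Ω → ℝ) x)‖₊) ^ pr
            ≤ (∑ j ∈ t', z j) ^ pr := NNReal.rpow_le_rpow h0 hpr0.le
          _ ≤ (t'.card : ℝ≥0) ^ (pr - 1) * ∑ j ∈ t', z j ^ pr := h1
          _ ≤ (N : ℝ≥0) ^ (pr - 1) * ∑ j ∈ t, z j ^ pr := by
              refine mul_le_mul' (NNReal.rpow_le_rpow hcard hprm1) ?_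
              exact Finset.sum_le_sum_of_subset (Finset.filter_subset _ _)
      calc ((‖∑ j ∈ t, a j x * ((g j : Ω → ℝ) x)‖₊ : ℝ≥0∞)) ^ pr
          = (((‖∑ j ∈ t, a j x * ((g j : Ω → ℝ) x)‖₊ ^ pr : ℝ≥0)) : ℝ≥0∞) :=
            (ENNReal.coe_rpow_of_nonneg _ hpr0.le).symm
        _ ≤ (((N : ℝ≥0) ^ (pr - 1) * ∑ j ∈ t, z j ^ pr : ℝ≥0) : ℝ≥0∞) :=
            ENNReal.coe_le_coe.2 hfinal
        _ = ((N : ℝ≥0∞) ^ (pr - 1)) * ∑ j ∈ t, (‖a j x * ((g j : Ω → ℝ) x)‖₊ : ℝ≥0∞) ^ pr := by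
            simp only [ENNReal.coe_mul, ENNReal.coe_finset_sum,
              ENNReal.coe_rpow_of_nonneg _ hprm1, ENNReal.coe_rpow_of_nonneg _ hpr0.le,
              ENNReal.coe_natCast, hz]
    have hmeas2 : ∀ j, AEMeasurable (fun x => (‖a j x * ((g j : Ω → ℝ) x)‖₊ : ℝ≥0∞) ^ pr) μ := by
      intro j
      refine AEMeasurable.congr ((Lp.aestronglyMeasurable (Ma j (g j))).enorm.pow_const pr) ?_
      filter_upwards [hMa j (g j)] with x hx
      simp only [hx, enorm_eq_nnnorm]
    have hIineq : I (∑ j ∈ t, Ma j (g j))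
        ≤ ((N : ℝ≥0∞) ^ (pr - 1)) * ∑ j ∈ t, I (Ma j (g j)) := by
      have e1 : I (∑ j ∈ t, Ma j (g j))
          = ∫⁻ x, (‖∑ j ∈ t, a j x * ((g j : Ω → ℝ) x)‖₊ : ℝ≥0∞) ^ pr ∂μ := by
        refine lintegral_congr_ae ?_
        have hall : ∀ᵐ x ∂μ, ∀ j ∈ t, (Ma j (g j) : Ω → ℝ) x = a j x * ((g j : Ω → ℝ) x) :=
          (Filter.eventually_all_finset t).2 (fun j _ => hMa j (g j))
        filter_upwards [stmt10_coeFn_sum t (fun j => Ma j (g j)), hall] with x hx1 hx2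
        rw [hx1, show ∑ j ∈ t, ((Ma j (g j) : Ω → ℝ) x) = ∑ j ∈ t, a j x * ((g j : Ω → ℝ) x)
          from Finset.sum_congr rfl fun j hj => hx2 j hj]
      have hNtop : ((N : ℝ≥0∞) ^ (pr - 1)) ≠ ⊤ :=
        ENNReal.rpow_ne_top_of_nonneg hprm1 (by simp)
      calc I (∑ j ∈ t, Ma j (g j))
          = ∫⁻ x, (‖∑ j ∈ t, a j x * ((g j : Ω → ℝ) x)‖₊ : ℝ≥0∞) ^ pr ∂μ := e1
        _ ≤ ∫⁻ x, ((N : ℝ≥0∞) ^ (pr - 1))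
              * ∑ j ∈ t, (‖a j x * ((g j : Ω → ℝ) x)‖₊ : ℝ≥0∞) ^ pr ∂μ := lintegral_mono hpt
        _ = ((N : ℝ≥0∞) ^ (pr - 1))
              * ∫⁻ x, ∑ j ∈ t, (‖a j x * ((g j : Ω → ℝ) x)‖₊ : ℝ≥0∞) ^ pr ∂μ :=
            lintegral_const_mul' _ _ hNtop
        _ = ((N : ℝ≥0∞) ^ (pr - 1))
              * ∑ j ∈ t, ∫⁻ x, (‖a j x * ((g j : Ω → ℝ) x)‖₊ : ℝ≥0∞) ^ pr ∂μ := by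
            rw [lintegral_finset_sum' t (fun j _ => hmeas2 j)]
        _ = ((N : ℝ≥0∞) ^ (pr - 1)) * ∑ j ∈ t, I (Ma j (g j)) := by
            congr 1
            refine Finset.sum_congr rfl fun j hj => ?_
            refine lintegral_congr_ae ?_
            filter_upwards [hMa j (g j)] with x hx
            rw [hx]
    have hRfin : ((N : ℝ≥0∞) ^ (pr - 1)) * ∑ j ∈ t, I (Ma j (g j)) ≠ ⊤ :=
      ENNReal.mul_ne_top (ENNReal.rpow_ne_top_of_nonneg hprm1 (by simp))
        (ENNReal.sum_lt_top.2 fun j _ => (hIfin _).lt_top).ne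
    have h6 := ENNReal.toReal_mono hRfin hIineq
    rw [hInorm]
    refine le_trans h6 ?_
    rw [ENNReal.toReal_mul, ENNReal.toReal_sum (fun j _ => hIfin _)]
    have hN1 : ((N : ℝ≥0∞) ^ (pr - 1)).toReal = Npr1 := by
      rw [← ENNReal.toReal_rpow, ENNReal.toReal_natCast]
    rw [hN1]
    refine mul_le_mul_of_nonneg_left ?_ hNpr1nonneg
    refine Finset.sum_le_sum fun j hj => ?_
    rw [← hInorm]
    exact Real.rpow_le_rpow (norm_nonneg _) (hMaNorm j (g j)) hpr0.le
  -- summability of the series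
  have hsum : ∀ f : E, Summable (fun j => Ma j (A j (Mb j f))) := by
    intro f
    rw [summable_iff_vanishing_norm]
    intro ε hε
    set δ : ℝ := ε ^ pr / (Npr1 + 1) with hδdef
    have hδ : 0 < δ := div_pos (Real.rpow_pos_of_pos hε _) (by linarith)
    obtain ⟨F, hF⟩ := summable_iff_vanishing_norm.1 (hs_summable f) δ hδ
    refine ⟨F, fun t ht => ?_⟩
    have h1 : ‖∑ j ∈ t, Ma j (A j (Mb j f))‖ ^ pr ≤ Npr1 * ∑ j ∈ t, ‖A j (Mb j f)‖ ^ pr :=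
      hkey _ t
    have h2 : ∑ j ∈ t, ‖A j (Mb j f)‖ ^ pr < δ :=
      lt_of_le_of_lt (le_abs_self _) (by simpa [Real.norm_eq_abs] using hF t ht)
    have h2' : (0 : ℝ) ≤ ∑ j ∈ t, ‖A j (Mb j f)‖ ^ pr :=
      Finset.sum_nonneg fun j _ => Real.rpow_nonneg (norm_nonneg _) _
    have h6 : (Npr1 + 1) * δ = ε ^ pr := by
      rw [hδdef, mul_div_cancel₀ _ (by linarith : Npr1 + 1 ≠ 0)]
    have h3 : Npr1 * ∑ j ∈ t, ‖A j (Mb j f)‖ ^ pr < ε ^ pr := by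
      have h4 : Npr1 * ∑ j ∈ t, ‖A j (Mb j f)‖ ^ pr ≤ Npr1 * δ :=
        mul_le_mul_of_nonneg_left h2.le hNpr1nonneg
      nlinarith
    by_contra hcon
    push_neg at hcon
    have h5 := Real.rpow_le_rpow hε.le hcon hpr0.le
    linarith [lt_of_le_of_lt h1 h3]
  -- the `ℓ^p` estimate
  have hpart3 : ∀ f : E, ∑' j, ‖Ma j (A j (Mb j f))‖ ^ pr ≤ N * C ^ pr * ‖f‖ ^ pr := by
    intro f
    have hle : ∀ j, ‖Ma j (A j (Mb j f))‖ ^ pr ≤ ‖A j (Mb j f)‖ ^ pr := fun j =>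
      Real.rpow_le_rpow (norm_nonneg _) (hMaNorm _ _) hpr0.le
    have hbnd : ∀ n, ∑ j ∈ Finset.range n, ‖Ma j (A j (Mb j f))‖ ^ pr
        ≤ N * C ^ pr * ‖f‖ ^ pr := by
      intro n
      calc ∑ j ∈ Finset.range n, ‖Ma j (A j (Mb j f))‖ ^ pr
          ≤ ∑ j ∈ Finset.range n, ‖A j (Mb j f)‖ ^ pr := Finset.sum_le_sum fun j _ => hle j
        _ ≤ C ^ pr * (N * ‖f‖ ^ pr) := hs_bound f _
        _ = N * C ^ pr * ‖f‖ ^ pr := by ring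
    have hsummable_r : Summable (fun j => ‖Ma j (A j (Mb j f))‖ ^ pr) :=
      summable_of_sum_range_le (fun n => Real.rpow_nonneg (norm_nonneg _) _) hbnd
    exact Summable.tsum_le_of_sum_range_le hsummable_r hbnd
  -- norm bound for the limit
  have hLf : ∀ f : E, ‖∑' j, Ma j (A j (Mb j f))‖ ≤ ((N : ℝ) * C) * ‖f‖ := by
    intro f
    have hS := (hsum f).hasSum
    have hcont : Continuous fun x : E => ‖x‖ ^ pr :=
      continuous_norm.rpow_const (fun x => Or.inr hpr0.le)
    have htend : Filter.Tendsto (fun F : Finset ℕ => ‖∑ j ∈ F, Ma j (A j (Mb j f))‖ ^ pr)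
        Filter.atTop (nhds (‖∑' j, Ma j (A j (Mb j f))‖ ^ pr)) :=
      (hcont.continuousAt.tendsto.comp hS)
    have hbound : ∀ F : Finset ℕ, ‖∑ j ∈ F, Ma j (A j (Mb j f))‖ ^ pr
        ≤ Npr1 * (C ^ pr * (N * ‖f‖ ^ pr)) := fun F =>
      le_trans (hkey _ F) (mul_le_mul_of_nonneg_left (hs_bound f F) hNpr1nonneg)
    have h7 : ‖∑' j, Ma j (A j (Mb j f))‖ ^ pr ≤ Npr1 * (C ^ pr * (N * ‖f‖ ^ pr)) :=
      le_of_tendsto htend (Filter.Eventually.of_forall hbound)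
    have h9 : (N : ℝ) ^ pr = Npr1 * (N : ℝ) := by
      have h9' : (N : ℝ) ^ ((pr - 1) + 1) = (N : ℝ) ^ (pr - 1) * (N : ℝ) ^ (1 : ℝ) :=
        Real.rpow_add_of_nonneg (Nat.cast_nonneg N) hprm1 zero_le_one
      rw [sub_add_cancel] at h9'
      rw [h9', Real.rpow_one]
    have h8 : Npr1 * (C ^ pr * (N * ‖f‖ ^ pr)) = (((N : ℝ) * C) * ‖f‖) ^ pr := by
      rw [Real.mul_rpow (mul_nonneg (Nat.cast_nonneg N) hC0) (norm_nonneg f),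
        Real.mul_rpow (Nat.cast_nonneg N) hC0, h9]
      ring
    rw [h8] at h7
    by_contra hcon
    push_neg at hcon
    have h10 := Real.rpow_lt_rpow
      (mul_nonneg (mul_nonneg (Nat.cast_nonneg N) hC0) (norm_nonneg f)) hcon hpr0
    linarith
  -- construct the operator
  let L : E →ₗ[ℝ] E :=
    { toFun := fun f => ∑' j, Ma j (A j (Mb j f))
      map_add' := by
        intro f g
        have h1 : ∀ j, Ma j (A j (Mb j (f + g))) = Ma j (A j (Mb j f)) + Ma j (A j (Mb j g)) := by
          intro j; rw [map_add, map_add, map_add]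
        calc ∑' j, Ma j (A j (Mb j (f + g)))
            = ∑' j, (Ma j (A j (Mb j f)) + Ma j (A j (Mb j g))) := tsum_congr h1
          _ = _ := ((hsum f).hasSum.add (hsum g).hasSum).tsum_eq
      map_smul' := by
        intro c f
        have h1 : ∀ j, Ma j (A j (Mb j (c • f))) = c • Ma j (A j (Mb j f)) := by
          intro j; simp only [_root_.map_smul]
        simp only [RingHom.id_apply]
        calc ∑' j, Ma j (A j (Mb j (c • f)))
            = ∑' j, c • Ma j (A j (Mb j f)) := tsum_congr h1
          _ = _ := ((hsum f).hasSum.const_smul c).tsum_eq }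
  let T : E →L[ℝ] E := L.mkContinuous ((N : ℝ) * C) hLf
  refine ⟨T, fun f => (hsum f).hasSum, ?_, hpart3⟩
  have hT1 : ‖T‖ ≤ (N : ℝ) * C := LinearMap.mkContinuous_norm_le L
    (mul_nonneg (Nat.cast_nonneg N) hC0) hLf
  refine le_trans hT1 ?_
  have hNN : (N : ℝ) ≤ (N : ℝ) ^ 2 := by
    exact_mod_cast Nat.le_self_pow two_ne_zero N
  exact mul_le_mul_of_nonneg_right hNN hC0
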